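/- Let D=(E,𝓕) be a connected odd normal binary delta-matroid. Then the twist polynomial of D is a monomial (i.e., there exists k with w(D*A)=k for all A⊆E) if and only if E is a single element e and 𝓕={∅,{e}}. -/

import Mathlib

open Finset
open scoped symmDiff

noncomputable section

namespace DeltaMatroid

variable {α : Type*} [DecidableEq α]

/-- A delta-matroid on ground set `E` with feasible sets `F`: `F` is nonempty, consists of
subsets of `E`, and satisfies the symmetric exchange axiom. -/
def IsDeltaMatroid (E : Finset α) (F : Finset (Finset α)) : Prop :=
  F.Nonempty ∧ (∀ X ∈ F, X ⊆ E) ∧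
    ∀ X ∈ F, ∀ Y ∈ F, ∀ u ∈ X ∆ Y, ∃ v ∈ X ∆ Y, X ∆ ({u, v} : Finset α) ∈ F

/-- The twist `D * A` of the feasible sets by a subset `A`. -/
def twist (F : Finset (Finset α)) (A : Finset α) : Finset (Finset α) :=
  F.image fun X => A ∆ X

/-- Maximum cardinality of a feasible set. -/
def maxCard (F : Finset (Finset α)) : ℕ := F.sup Finset.card

/-- Minimum cardinality of a feasible set. -/
def minCard (F : Finset (Finset α)) : ℕ := sInf (Finset.card '' (F : Set (Finset α)))

/-- The width `w(D)`. -/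
def width (F : Finset (Finset α)) : ℕ := maxCard F - minCard F

/-- Feasible sets of minimum cardinality. -/
def Fmin (F : Finset (Finset α)) : Finset (Finset α) := F.filter fun X => X.card = minCard F

/-- Feasible sets of maximum cardinality. -/
def Fmax (F : Finset (Finset α)) : Finset (Finset α) := F.filter fun X => X.card = maxCard F

/-- `e` is a ribbon loop: it lies in no minimum-cardinality feasible set. -/
def IsRibbonLoop (F : Finset (Finset α)) (e : α) : Prop := ∀ X ∈ Fmin F, e ∉ X

/-- A ribbon loop is non-orientable if it is also a ribbon loop of `D * e`. -/
def IsNonorientableRibbonLoop (F : Finset (Finset α)) (e : α) : Prop :=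
  IsRibbonLoop F e ∧ IsRibbonLoop (twist F {e}) e

/-- A ribbon loop is orientable if it is not a ribbon loop of `D * e`. -/
def IsOrientableRibbonLoop (F : Finset (Finset α)) (e : α) : Prop :=
  IsRibbonLoop F e ∧ ¬ IsRibbonLoop (twist F {e}) e

/-- `e` is a loop: it lies in no feasible set. -/
def IsLoop (F : Finset (Finset α)) (e : α) : Prop := ∀ X ∈ F, e ∉ X

/-- `e` is a coloop: it lies in every feasible set. -/
def IsColoop (F : Finset (Finset α)) (e : α) : Prop := ∀ X ∈ F, e ∈ X

/-- Contraction `D / e`. -/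
def contract (F : Finset (Finset α)) (e : α) : Finset (Finset α) :=
  if ∀ X ∈ F, e ∉ X then F
  else (F.filter fun X => e ∈ X).image fun X => X.erase e

/-- Deletion `D \ e`. -/
def delete (F : Finset (Finset α)) (e : α) : Finset (Finset α) :=
  if ∀ X ∈ F, e ∈ X then F.image fun X => X.erase e
  else F.filter fun X => e ∉ X

/-- Deletion of every element of `A` (in some order; the order does not matter). -/
def deleteSet (F : Finset (Finset α)) (A : Finset α) : Finset (Finset α) :=
  A.toList.foldl delete F

/-- The restriction `D |_A = D \ (E \ A)` of a delta-matroid with ground set `E`. -/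
def restrict (F : Finset (Finset α)) (E A : Finset α) : Finset (Finset α) :=
  deleteSet F (E \ A)

/-- Feasible sets of the direct sum `D ⊕ D'`. -/
def directSum (F G : Finset (Finset α)) : Finset (Finset α) :=
  (F ×ˢ G).image fun p => p.1 ∪ p.2

/-- A delta-matroid is connected if it is not a direct sum of two delta-matroids on
nonempty ground sets. -/
def IsConnected (E : Finset α) (F : Finset (Finset α)) : Prop :=
  ¬ ∃ (E₁ E₂ : Finset α) (F₁ F₂ : Finset (Finset α)),
      E₁.Nonempty ∧ E₂.Nonempty ∧ Disjoint E₁ E₂ ∧ E = E₁ ∪ E₂ ∧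
      IsDeltaMatroid E₁ F₁ ∧ IsDeltaMatroid E₂ F₂ ∧ F = directSum F₁ F₂

/-- A delta-matroid is even if all feasible sets have the same parity of cardinality. -/
def IsEvenDM (F : Finset (Finset α)) : Prop :=
  ∀ X ∈ F, ∀ Y ∈ F, X.card % 2 = Y.card % 2

variable {ι : Type*} [Fintype ι] [DecidableEq ι]

/-- The feasible sets of `D(C)`: subsets `A` whose principal submatrix `C[A]` is nonsingular
(over `GF(2)`, i.e. has nonzero determinant); `C[∅]` is nonsingular by convention. -/
def binaryFeasible (C : Matrix ι ι (ZMod 2)) : Finset (Finset ι) :=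
  Finset.univ.filter fun A =>
    (C.submatrix (fun x : {a // a ∈ A} => (x : ι)) (fun x : {a // a ∈ A} => (x : ι))).det ≠ 0

/-- The (simple-graph part of the) intersection graph `G_D` of a normal binary delta-matroid
`D(C)`: distinct `u, v` adjacent iff `C u v = 1`.  Loops are recorded by the diagonal of `C`. -/
def interGraph (C : Matrix ι ι (ZMod 2)) : SimpleGraph ι :=
  SimpleGraph.fromRel fun u v => C u v = 1


section Auxiliary

open Matrix

set_option linter.unusedSectionVars false
set_option linter.unreachableTactic false
set_option linter.unusedTactic false
set_option linter.unnecessarySeqFocus false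
set_option maxHeartbeats 1000000

/-- Principal submatrix indexed by a finset. -/
def subm (C : Matrix ι ι (ZMod 2)) (A : Finset ι) :
    Matrix {a // a ∈ A} {a // a ∈ A} (ZMod 2) :=
  C.submatrix (fun x : {a // a ∈ A} => (x : ι)) (fun x : {a // a ∈ A} => (x : ι))

/-- Feasibility: the principal submatrix is nonsingular. -/
def Feas (C : Matrix ι ι (ZMod 2)) (A : Finset ι) : Prop := (subm C A).det ≠ 0

lemma feas_empty (C : Matrix ι ι (ZMod 2)) : Feas C ∅ := by
  have : IsEmpty {a // a ∈ (∅ : Finset ι)} :=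
    ⟨fun x => absurd x.2 (Finset.notMem_empty _)⟩
  rw [Feas, Matrix.det_isEmpty]
  exact one_ne_zero

lemma det_subm_singleton (C : Matrix ι ι (ZMod 2)) (z : ι) :
    (subm C {z}).det = C z z := by
  haveI : Unique {a // a ∈ ({z} : Finset ι)} :=
    ⟨⟨⟨z, Finset.mem_singleton_self z⟩⟩, fun a => Subtype.ext (Finset.mem_singleton.mp a.2)⟩
  rw [Matrix.det_unique]
  have hd : ((default : {a // a ∈ ({z} : Finset ι)}) : ι) = z :=
    Finset.mem_singleton.mp (Subtype.mem _)
  show C ((default : {a // a ∈ ({z} : Finset ι)}) : ι)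
      ((default : {a // a ∈ ({z} : Finset ι)}) : ι) = C z z
  rw [hd]

lemma det_subm_pair (C : Matrix ι ι (ZMod 2)) {z w : ι} (hzw : z ≠ w) :
    (subm C {z, w}).det = C z z * C w w - C z w * C w z := by
  have hz : z ∈ ({z, w} : Finset ι) := by simp
  have hw : w ∈ ({z, w} : Finset ι) := by simp
  let e : Fin 2 ≃ {a // a ∈ ({z, w} : Finset ι)} :=
    { toFun := fun i => if i = 0 then ⟨z, hz⟩ else ⟨w, hw⟩
      invFun := fun a => if (a : ι) = z then 0 else 1
      left_inv := by
        intro i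
        fin_cases i <;> simp [hzw.symm]
      right_inv := by
        rintro ⟨a, ha⟩
        rcases Finset.mem_insert.mp ha with rfl | ha'
        · simp
        · have : a = w := Finset.mem_singleton.mp ha'
          subst this
          simp [hzw.symm] }
  rw [← Matrix.det_submatrix_equiv_self e (subm C {z, w}), Matrix.det_fin_two]
  have h00 : ((subm C {z, w}).submatrix e e) 0 0 = C z z := rfl
  have h01 : ((subm C {z, w}).submatrix e e) 0 1 = C z w := rfl
  have h10 : ((subm C {z, w}).submatrix e e) 1 0 = C w z := rfl
  have h11 : ((subm C {z, w}).submatrix e e) 1 1 = C w w := rfl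
  rw [h00, h01, h10, h11]

lemma zmod2_cases : ∀ x : ZMod 2, x = 0 ∨ x = 1 := by decide

/-- A matrix with a too-large zero principal block is singular. -/
lemma det_eq_zero_of_zero_block {n : Type*} [Fintype n] [DecidableEq n]
    (M : Matrix n n (ZMod 2)) (p : n → Prop) [DecidablePred p]
    (h0 : ∀ i j, p i → p j → M i j = 0)
    (hcard : (Finset.univ.filter fun i => ¬ p i).card < (Finset.univ.filter p).card) :
    M.det = 0 := by
  rw [Matrix.det_apply]
  refine Finset.sum_eq_zero fun σ _ => ?_
  have hex : ∃ i, p i ∧ p (σ i) := by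
    by_contra h
    push_neg at h
    have hmap : ∀ i ∈ Finset.univ.filter p, σ i ∈ Finset.univ.filter fun i => ¬ p i := by
      intro i hi
      simp only [Finset.mem_filter, Finset.mem_univ, true_and] at hi ⊢
      exact h i hi
    have := Finset.card_le_card_of_injOn σ hmap
      (fun a _ b _ hab => σ.injective hab)
    omega
  obtain ⟨i, hpi, hpsi⟩ := hex
  have : (∏ j, M (σ j) j) = 0 :=
    Finset.prod_eq_zero (Finset.mem_univ i) (h0 (σ i) i hpsi hpi)
  rw [this, smul_zero]

/-- A fixed-point-free involution has even support. -/
lemma even_card_of_fpf {n : Type*} [DecidableEq n] (σ : Equiv.Perm n)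
    (hσ : ∀ a, σ (σ a) = a) :
    ∀ s : Finset n, (∀ a ∈ s, σ a ∈ s) → (∀ a ∈ s, σ a ≠ a) → Even s.card := by
  intro s
  induction s using Finset.strongInduction with
  | _ s ih =>
    intro hmem hnf
    rcases s.eq_empty_or_nonempty with rfl | ⟨a, ha⟩
    · simp
    · have hsa : σ a ∈ s := hmem a ha
      have hne : σ a ≠ a := hnf a ha
      set t := (s.erase a).erase (σ a) with ht
      have htsub : t ⊂ s := by
        refine Finset.ssubset_of_subset_of_ssubset ?_ (Finset.erase_ssubset ha)
        exact Finset.erase_subset _ _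
      have htmem : ∀ b ∈ t, σ b ∈ t := by
        intro b hb
        have hb1 : b ≠ σ a := (Finset.mem_erase.mp hb).1
        have hb2 : b ≠ a := (Finset.mem_erase.mp (Finset.mem_erase.mp hb).2).1
        have hb3 : b ∈ s := (Finset.mem_erase.mp (Finset.mem_erase.mp hb).2).2
        refine Finset.mem_erase.mpr ⟨?_, Finset.mem_erase.mpr ⟨?_, hmem b hb3⟩⟩
        · intro h
          exact hb2 (by rw [← hσ b, h, hσ a])
        · intro h
          exact hb1 (by rw [← hσ b, h])
      have htnf : ∀ b ∈ t, σ b ≠ b := by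
        intro b hb
        exact hnf b (Finset.mem_erase.mp (Finset.mem_erase.mp hb).2).2
      have hcard : t.card + 2 = s.card := by
        have h1 : σ a ∈ s.erase a := Finset.mem_erase.mpr ⟨hne, hsa⟩
        rw [ht, Finset.card_erase_of_mem h1, Finset.card_erase_of_mem ha]
        have : 1 ≤ s.card := Finset.card_pos.mpr ⟨a, ha⟩
        have : 2 ≤ s.card := by
          have : ({a, σ a} : Finset n) ⊆ s := by
            intro x hx
            rcases Finset.mem_insert.mp hx with rfl | hx
            · exact ha
            · rwa [Finset.mem_singleton.mp hx]
          have h2 := Finset.card_le_card this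
          rwa [Finset.card_pair (Ne.symm hne)] at h2
        omega
      obtain ⟨m, hm⟩ := ih t htsub htmem htnf
      exact ⟨m + 1, by omega⟩

/-- An odd-dimensional symmetric matrix with zero diagonal over GF(2) is singular. -/
lemma det_eq_zero_of_alternating {n : Type*} [Fintype n] [DecidableEq n]
    (M : Matrix n n (ZMod 2)) (hsym : ∀ i j, M j i = M i j) (hdiag : ∀ i, M i i = 0)
    (hodd : Fintype.card n % 2 = 1) : M.det = 0 := by
  rw [Matrix.det_apply]
  refine Finset.sum_ninvolution (fun σ => σ⁻¹) ?_ ?_ (fun _ => Finset.mem_univ _) ?_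
  · intro σ
    have hprod : (∏ i, M (σ⁻¹ i) i) = ∏ i, M (σ i) i := by
      calc (∏ i, M (σ⁻¹ i) i) = ∏ i, M (σ⁻¹ (σ i)) (σ i) :=
            (Equiv.prod_comp σ fun i => M (σ⁻¹ i) i).symm
        _ = ∏ i, M i (σ i) := by simp
        _ = ∏ i, M (σ i) i := by
            refine Finset.prod_congr rfl fun i _ => ?_
            exact (hsym i (σ i)).symm
    have hsign : Equiv.Perm.sign σ⁻¹ = Equiv.Perm.sign σ := by simp
    rw [hsign, hprod]
    generalize (Equiv.Perm.sign σ • ∏ i, M (σ i) i : ZMod 2) = x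
    revert x
    decide
  · intro σ hne
    by_contra h
    have hinv : ∀ a, σ (σ a) = a := by
      intro a
      have : σ (σ⁻¹ a) = a := σ.apply_symm_apply a
      rwa [h] at this
    by_cases hfix : ∃ i, σ i = i
    · obtain ⟨i, hi⟩ := hfix
      apply hne
      have : (∏ j, M (σ j) j) = 0 :=
        Finset.prod_eq_zero (Finset.mem_univ i) (by rw [hi]; exact hdiag i)
      rw [this, smul_zero]
    · push_neg at hfix
      have := even_card_of_fpf σ hinv Finset.univ (fun a _ => Finset.mem_univ _)
        (fun a _ => hfix a)
      rw [Finset.card_univ] at this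
      obtain ⟨m, hm⟩ := this
      omega
  · intro σ
    simp

lemma sd_cancel (A Z : Finset α) : A ∆ (A ∆ Z) = Z := symmDiff_symmDiff_cancel_left A Z

lemma sd_singleton {A : Finset α} {x : α} (h : x ∉ A) : A ∆ {x} = insert x A := by
  ext a
  simp only [Finset.mem_symmDiff, Finset.mem_singleton, Finset.mem_insert]
  constructor
  · rintro (⟨ha, _⟩ | ⟨rfl, _⟩)
    · exact Or.inr ha
    · exact Or.inl rfl
  · rintro (rfl | ha)
    · exact Or.inr ⟨rfl, h⟩
    · exact Or.inl ⟨ha, fun hax => h (hax ▸ ha)⟩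

lemma sd_pair {A : Finset α} {z w : α} (hz : z ∉ A) (hw : w ∉ A) :
    A ∆ {z, w} = insert z (insert w A) := by
  ext a
  simp only [Finset.mem_symmDiff, Finset.mem_insert, Finset.mem_singleton]
  constructor
  · rintro (⟨ha, _⟩ | ⟨hzw, _⟩)
    · exact Or.inr (Or.inr ha)
    · rcases hzw with rfl | rfl
      · exact Or.inl rfl
      · exact Or.inr (Or.inl rfl)
  · rintro (rfl | rfl | ha)
    · exact Or.inr ⟨Or.inl rfl, hz⟩
    · exact Or.inr ⟨Or.inr rfl, hw⟩
    · refine Or.inl ⟨ha, ?_⟩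
      rintro (rfl | rfl)
      · exact hz ha
      · exact hw ha

lemma card_symmDiff (A B : Finset α) : (A ∆ B).card = (A \ B).card + (B \ A).card := by
  rw [symmDiff_def, Finset.sup_eq_union]
  exact Finset.card_union_of_disjoint disjoint_sdiff_sdiff

lemma card_filter_subtype (V : Finset α) (q : α → Prop) [DecidablePred q] :
    (Finset.univ.filter fun a : {x // x ∈ V} => q (a : α)).card = (V.filter q).card := by
  refine Finset.card_bij (fun a _ => (a : α)) ?_ ?_ ?_
  · intro a ha
    simp only [Finset.mem_filter, Finset.mem_univ, true_and] at ha
    exact Finset.mem_filter.mpr ⟨a.2, ha⟩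
  · intro a _ b _ h
    exact Subtype.ext h
  · intro b hb
    obtain ⟨hbV, hbq⟩ := Finset.mem_filter.mp hb
    exact ⟨⟨b, hbV⟩, by simp [hbq], rfl⟩

lemma mem_twist {F : Finset (Finset α)} {A Z : Finset α} :
    Z ∈ twist F A ↔ A ∆ Z ∈ F := by
  constructor
  · rintro h
    obtain ⟨X, hX, rfl⟩ := Finset.mem_image.mp h
    rwa [symmDiff_symmDiff_cancel_left]
  · intro h
    exact Finset.mem_image.mpr ⟨A ∆ Z, h, symmDiff_symmDiff_cancel_left A Z⟩

lemma twist_twist (F : Finset (Finset α)) (A B : Finset α) :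
    twist (twist F B) A = twist F (B ∆ A) := by
  ext Z
  rw [mem_twist, mem_twist, mem_twist, symmDiff_assoc]

lemma twist_empty (F : Finset (Finset α)) : twist F ∅ = F := by
  ext Z
  rw [mem_twist, show (∅ : Finset α) = ⊥ from rfl, bot_symmDiff]

lemma minCard_le {F : Finset (Finset α)} {X : Finset α} (h : X ∈ F) :
    minCard F ≤ X.card :=
  Nat.sInf_le ⟨X, by simpa using h, rfl⟩

lemma exists_minCard {F : Finset (Finset α)} (h : F.Nonempty) :
    ∃ X ∈ F, X.card = minCard F := by
  obtain ⟨X0, hX0⟩ := h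
  have hne : (Finset.card '' (F : Set (Finset α))).Nonempty := ⟨X0.card, X0, by simpa, rfl⟩
  obtain ⟨X, hX, hc⟩ := Nat.sInf_mem hne
  exact ⟨X, by simpa using hX, hc⟩

lemma minCard_eq_zero {F : Finset (Finset α)} (h : ∅ ∈ F) : minCard F = 0 :=
  Nat.le_antisymm (by simpa using minCard_le h) (Nat.zero_le _)

lemma le_maxCard {F : Finset (Finset α)} {X : Finset α} (h : X ∈ F) :
    X.card ≤ maxCard F :=
  Finset.le_sup h

lemma exists_maxCard {F : Finset (Finset α)} (h : F.Nonempty) :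
    ∃ X ∈ F, X.card = maxCard F := by
  obtain ⟨X, hX, h'⟩ := Finset.exists_mem_eq_sup F h Finset.card
  exact ⟨X, hX, h'.symm⟩

/-- Indicator diagonal matrix. -/
def indD (A : Finset ι) : Matrix ι ι (ZMod 2) :=
  Matrix.diagonal (fun i => if i ∈ A then (1 : ZMod 2) else 0)

/-- The "mixed basis" matrix: columns of `C` inside `A`, identity columns outside. -/
def mixM (C : Matrix ι ι (ZMod 2)) (A : Finset ι) : Matrix ι ι (ZMod 2) :=
  C * indD A + 1 + indD A

lemma mixM_apply (C : Matrix ι ι (ZMod 2)) (A : Finset ι) (i j : ι) :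
    mixM C A i j = if j ∈ A then C i j else (if i = j then 1 else 0) := by
  simp only [mixM, indD, Matrix.add_apply, Matrix.mul_diagonal, Matrix.one_apply,
    Matrix.diagonal_apply]
  by_cases hj : j ∈ A <;> by_cases hij : i = j
  · subst hij
    simp [hj]
    generalize C i i = x
    revert x
    decide
  · simp [hj, hij]
  · subst hij
    simp [hj]
  · simp [hj, hij]

lemma det_mixM (C : Matrix ι ι (ZMod 2)) (A : Finset ι) :
    (mixM C A).det = (subm C A).det := by
  classical
  let e : {x // x ∈ A} ⊕ {x // ¬ x ∈ A} ≃ ι := Equiv.sumCompl (fun x => x ∈ A)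
  have hblock : (mixM C A).submatrix e e =
      Matrix.fromBlocks (subm C A) 0
        (Matrix.of fun (p : {x // ¬ x ∈ A}) (q : {x // x ∈ A}) => C (p : ι) (q : ι)) 1 := by
    funext x y
    cases x with
    | inl a =>
      cases y with
      | inl b =>
        simp only [e, Matrix.submatrix_apply, Equiv.sumCompl_apply_inl, mixM_apply,
          Matrix.fromBlocks_apply₁₁]
        rw [if_pos b.2]
        rfl
      | inr b =>
        simp only [e, Matrix.submatrix_apply, Equiv.sumCompl_apply_inl,
          Equiv.sumCompl_apply_inr, mixM_apply, Matrix.fromBlocks_apply₁₂]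
        rw [if_neg b.2, if_neg, Matrix.zero_apply]
        intro h
        exact b.2 (h ▸ a.2)
    | inr a =>
      cases y with
      | inl b =>
        simp only [e, Matrix.submatrix_apply, Equiv.sumCompl_apply_inr,
          Equiv.sumCompl_apply_inl, mixM_apply, Matrix.fromBlocks_apply₂₁, Matrix.of_apply]
        rw [if_pos b.2]
      | inr b =>
        simp only [e, Matrix.submatrix_apply, Equiv.sumCompl_apply_inr, mixM_apply,
          Matrix.fromBlocks_apply₂₂]
        rw [if_neg b.2]
        rcases eq_or_ne a b with rfl | hab
        · simp
        · rw [if_neg, Matrix.one_apply_ne hab]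
          exact fun h => hab (Subtype.ext h)
  calc (mixM C A).det = ((mixM C A).submatrix e e).det :=
        (Matrix.det_submatrix_equiv_self e _).symm
    _ = (subm C A).det * (1 : Matrix {x // ¬ x ∈ A} {x // ¬ x ∈ A} (ZMod 2)).det := by
        rw [hblock, Matrix.det_fromBlocks_zero₁₂]
    _ = (subm C A).det := by rw [Matrix.det_one, mul_one]

/-- Principal pivoting: twisting a binary delta-matroid by a feasible set keeps it binary. -/
lemma piv (C : Matrix ι ι (ZMod 2)) (hC : Cᵀ = C) (B : Finset ι) (hB : Feas C B) :
    ∃ C' : Matrix ι ι (ZMod 2), C'ᵀ = C' ∧ ∀ Z : Finset ι, (Feas C' Z ↔ Feas C (B ∆ Z)) := by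
  classical
  set D : Matrix ι ι (ZMod 2) := indD B with hD
  set M : Matrix ι ι (ZMod 2) := mixM C B with hM
  set N : Matrix ι ι (ZMod 2) := C + C * D + D with hN
  have hdetM : M.det ≠ 0 := by rw [hM, det_mixM]; exact hB
  have hMunit : IsUnit M.det := isUnit_iff_ne_zero.mpr hdetM
  have hMTunit : IsUnit Mᵀ.det := by rwa [Matrix.det_transpose]
  have hDT : Dᵀ = D := by rw [hD, indD]; exact Matrix.diagonal_transpose _
  have hMT : Mᵀ = D * C + 1 + D := by
    rw [hM, mixM, Matrix.transpose_add, Matrix.transpose_add, Matrix.transpose_mul,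
      Matrix.transpose_one, ← hD, hDT, hC]
  -- N = M + C + 1  (char 2)
  have hNM : N = M + C + 1 := by
    rw [hN, hM, mixM, hD]
    ext i j
    simp only [indD, Matrix.add_apply, Matrix.one_apply, Matrix.mul_diagonal,
      Matrix.diagonal_apply]
    by_cases hj : j ∈ B <;> by_cases hij : i = j <;>
      simp only [hj, hij, if_true, if_false] <;>
      first
        | (generalize C i j = x; revert x; decide)
        | (generalize C j j = x; revert x; decide)
        | (generalize C i i = x; revert x; decide)
        | decide
  have hNT : Nᵀ = Mᵀ + C + 1 := by
    rw [hNM, Matrix.transpose_add, Matrix.transpose_add, Matrix.transpose_one, hC]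
  -- the key symmetry identity M * Nᵀ = N * Mᵀ
  have key : M * Nᵀ = N * Mᵀ := by
    rw [hNT, hNM]
    simp only [mul_add, add_mul, mul_one, one_mul]
    have h6 : M * C + M = C * Mᵀ + Mᵀ := by
      rw [hMT, hM, mixM, hD]
      simp only [add_mul, mul_add, one_mul, mul_one, Matrix.mul_assoc]
      abel
    calc M * Mᵀ + M * C + M = M * Mᵀ + (M * C + M) := by rw [add_assoc]
      _ = M * Mᵀ + (C * Mᵀ + Mᵀ) := by rw [h6]
      _ = M * Mᵀ + C * Mᵀ + Mᵀ := by rw [add_assoc]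
  set C' : Matrix ι ι (ZMod 2) := M⁻¹ * N with hC'
  have hsymm : C'ᵀ = C' := by
    rw [hC', Matrix.transpose_mul, Matrix.transpose_nonsing_inv]
    calc Nᵀ * Mᵀ⁻¹ = M⁻¹ * (M * (Nᵀ * Mᵀ⁻¹)) :=
          (Matrix.nonsing_inv_mul_cancel_left _ _ hMunit).symm
      _ = M⁻¹ * (M * Nᵀ * Mᵀ⁻¹) := by rw [Matrix.mul_assoc]
      _ = M⁻¹ * (N * Mᵀ * Mᵀ⁻¹) := by rw [key]
      _ = M⁻¹ * (N * (Mᵀ * Mᵀ⁻¹)) := by rw [Matrix.mul_assoc]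
      _ = M⁻¹ * (N * 1) := by rw [Matrix.mul_nonsing_inv _ hMTunit]
      _ = M⁻¹ * N := by rw [mul_one]
  refine ⟨C', hsymm, fun Z => ?_⟩
  set DZ : Matrix ι ι (ZMod 2) := indD Z with hDZ
  have hDBZ : indD (B ∆ Z) = D + DZ := by
    rw [hD, hDZ]
    ext i j
    simp only [indD, Matrix.add_apply, Matrix.diagonal_apply]
    by_cases hij : i = j
    · subst hij
      by_cases hb : i ∈ B <;> by_cases hz : i ∈ Z <;>
        simp [Finset.mem_symmDiff, hb, hz] <;> decide
    · simp [hij]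
  have step3 : N * DZ + M + M * DZ = C * (D + DZ) + 1 + (D + DZ) := by
    rw [hN, hM, mixM, hD, hDZ]
    simp only [add_mul, mul_add, one_mul, mul_one]
    ext i j
    simp only [indD, Matrix.add_apply, Matrix.one_apply, Matrix.mul_diagonal,
      Matrix.diagonal_apply]
    by_cases hb : j ∈ B <;> by_cases hz : j ∈ Z <;> by_cases hij : i = j <;>
      simp only [hb, hz, hij, if_true, if_false] <;>
      first
        | (generalize C i j = x; revert x; decide)
        | (generalize C j j = x; revert x; decide)
        | (generalize C i i = x; revert x; decide)
        | decide
  have claim1 : M * mixM C' Z = mixM C (B ∆ Z) := by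
    have hMC' : M * C' = N := by
      rw [hC']
      exact Matrix.mul_nonsing_inv_cancel_left _ _ hMunit
    rw [mixM, mixM, hDBZ, ← hDZ]
    calc M * (C' * DZ + 1 + DZ) = M * (C' * DZ) + M * 1 + M * DZ := by
          rw [mul_add, mul_add]
      _ = N * DZ + M + M * DZ := by rw [← Matrix.mul_assoc, hMC', mul_one]
      _ = C * (D + DZ) + 1 + (D + DZ) := step3
  have h1 : mixM C' Z = M⁻¹ * mixM C (B ∆ Z) := by
    rw [← claim1, Matrix.nonsing_inv_mul_cancel_left _ _ hMunit]
  have h2 : (subm C' Z).det = M⁻¹.det * (subm C (B ∆ Z)).det := by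
    rw [← det_mixM, h1, Matrix.det_mul, det_mixM]
  have hMinv : M⁻¹.det ≠ 0 := by
    have hh := Matrix.det_nonsing_inv_mul_det M hMunit
    intro h0
    rw [h0, zero_mul] at hh
    exact zero_ne_one hh
  rw [Feas, Feas, h2]
  constructor
  · intro h hzero
    exact h (by rw [hzero, mul_zero])
  · exact fun h => mul_ne_zero hMinv h

lemma symm_apply {C : Matrix ι ι (ZMod 2)} (hC : Cᵀ = C) (a b : ι) : C b a = C a b := by
  conv_lhs => rw [← hC]
  rfl

/-- Bouchet's symmetric exchange axiom for binary delta-matroids. -/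
lemma exchange (C : Matrix ι ι (ZMod 2)) (hC : Cᵀ = C) {X Y : Finset ι}
    (hX : Feas C X) (hY : Feas C Y) {u : ι} (hu : u ∈ X ∆ Y) :
    ∃ v ∈ X ∆ Y, Feas C (X ∆ {u, v}) := by
  obtain ⟨C', hC', hiff⟩ := piv C hC X hX
  have hY' : Feas C' (X ∆ Y) := (hiff _).mpr (by rwa [symmDiff_symmDiff_cancel_left])
  by_contra hcon
  push_neg at hcon
  have huu : C' u u = 0 := by
    have h1 := hcon u hu
    have h2 : ¬ Feas C' {u} := by
      intro h
      exact h1 (by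
        have := (hiff {u}).mp h
        have heq : ({u, u} : Finset ι) = {u} := by simp
        rwa [heq])
    by_contra h0
    exact h2 (by rw [Feas, det_subm_singleton]; exact h0)
  have hrow : ∀ v : {a // a ∈ X ∆ Y}, (subm C' (X ∆ Y)) ⟨u, hu⟩ v = 0 := by
    rintro ⟨v, hv⟩
    show C' u v = 0
    rcases eq_or_ne v u with rfl | hvu
    · exact huu
    · have h2 : ¬ Feas C' {u, v} := fun h => hcon v hv ((hiff _).mp h)
      have h3 : C' u u * C' v v - C' u v * C' v u = 0 := by
        by_contra h0
        exact h2 (by rwa [Feas, det_subm_pair C' hvu.symm])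
      rw [huu, zero_mul, zero_sub, neg_eq_zero, symm_apply hC' u v] at h3
      exact mul_self_eq_zero.mp h3
  exact hY' (Matrix.det_eq_zero_of_row_eq_zero ⟨u, hu⟩ hrow)

/-- Extension lemma: a feasible set smaller than some other feasible set extends by
one or two elements to a feasible set. -/
lemma extension (C : Matrix ι ι (ZMod 2)) (hC : Cᵀ = C) {Z M : Finset ι}
    (hZ : Feas C Z) (hM : Feas C M) (h : Z.card < M.card) :
    ∃ W, Z ⊆ W ∧ (W.card = Z.card + 1 ∨ W.card = Z.card + 2) ∧ Feas C W := by
  by_contra hcon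
  push_neg at hcon
  obtain ⟨C', hC', hiff⟩ := piv C hC Z hZ
  have hdiag : ∀ z, z ∉ Z → C' z z = 0 := by
    intro z hz
    by_contra h0
    have hF : Feas C' {z} := by rw [Feas, det_subm_singleton]; exact h0
    have hF2 : Feas C (insert z Z) := by
      rw [← sd_singleton hz]
      exact (hiff _).mp hF
    exact hcon (insert z Z) (Finset.subset_insert _ _)
      (Or.inl (Finset.card_insert_of_notMem hz)) hF2
  have hoff : ∀ z w, z ∉ Z → w ∉ Z → C' z w = 0 := by
    intro z w hz hw
    rcases eq_or_ne z w with rfl | hzw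
    · exact hdiag z hz
    · by_contra h0
      have hdet : (subm C' {z, w}).det ≠ 0 := by
        rw [det_subm_pair C' hzw, hdiag z hz, hdiag w hw, symm_apply hC' z w]
        rw [zero_mul, zero_sub, neg_ne_zero]
        exact fun hsq => h0 (mul_self_eq_zero.mp hsq)
      have hF2 : Feas C (insert z (insert w Z)) := by
        rw [← sd_pair hz hw]
        exact (hiff _).mp hdet
      have hzw' : w ∉ insert z Z ∨ True := Or.inr trivial
      have hcard : (insert z (insert w Z)).card = Z.card + 2 := by
        rw [Finset.card_insert_of_notMem, Finset.card_insert_of_notMem hw]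
        simp only [Finset.mem_insert]
        rintro (rfl | hzZ)
        · exact hzw rfl
        · exact hz hzZ
      refine hcon _ ?_ (Or.inr hcard) hF2
      exact (Finset.subset_insert _ _).trans (Finset.subset_insert _ _) |>.trans (le_refl _)
  -- now the twisted matrix vanishes on the complement of Z, making Z ∆ M infeasible
  have hFV : Feas C' (Z ∆ M) := (hiff _).mpr (by rwa [symmDiff_symmDiff_cancel_left])
  apply hFV
  refine det_eq_zero_of_zero_block (subm C' (Z ∆ M)) (fun a => (a : ι) ∉ Z)
      (fun a b ha hb => hoff _ _ ha hb) ?_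
  · have e1 := card_filter_subtype (Z ∆ M) (fun x => ¬ x ∉ Z)
    have e2 := card_filter_subtype (Z ∆ M) (fun x => x ∉ Z)
    rw [e1, e2]
    have h1 : (Z ∆ M).filter (fun x => ¬ x ∉ Z) = Z \ M := by
      ext a
      simp only [Finset.mem_filter, Finset.mem_symmDiff, Finset.mem_sdiff, not_not]
      tauto
    have h2 : (Z ∆ M).filter (fun x => x ∉ Z) = M \ Z := by
      ext a
      simp only [Finset.mem_filter, Finset.mem_symmDiff, Finset.mem_sdiff]
      tauto
    rw [h1, h2]
    have h3 := Finset.card_sdiff_add_card_inter Z M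
    have h4 := Finset.card_sdiff_add_card_inter M Z
    have h5 : (Z ∩ M).card = (M ∩ Z).card := by rw [Finset.inter_comm]
    omega

lemma det_subm_isolated (C : Matrix ι ι (ZMod 2)) {X : Finset ι} {e : ι} (heX : e ∈ X)
    (hrow : ∀ a : ι, a ≠ e → C e a = 0) (hcol : ∀ a : ι, a ≠ e → C a e = 0) :
    (subm C X).det = C e e * (subm C (X.erase e)).det := by
  classical
  let q : Unit ⊕ {a // a ∈ X.erase e} ≃ {a // a ∈ X} :=
    { toFun := Sum.elim (fun _ => ⟨e, heX⟩)
        (fun a => ⟨(a : ι), Finset.mem_of_mem_erase a.2⟩)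
      invFun := fun a => if h : (a : ι) = e then Sum.inl ()
        else Sum.inr ⟨(a : ι), Finset.mem_erase.mpr ⟨h, a.2⟩⟩
      left_inv := by
        rintro (u | a)
        · simp
        · have hne : (a : ι) ≠ e := (Finset.mem_erase.mp a.2).1
          simp [hne]
      right_inv := by
        rintro ⟨a, ha⟩
        by_cases h : a = e
        · subst h
          simp
        · simp [h] }
  have hblock : (subm C X).submatrix q q =
      Matrix.fromBlocks (Matrix.of fun _ _ : Unit => C e e) 0
        (Matrix.of fun (_ : {a // a ∈ X.erase e}) (_ : Unit) => (0 : ZMod 2))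
        (subm C (X.erase e)) := by
    funext x y
    cases x with
    | inl u =>
      cases y with
      | inl v => rfl
      | inr b =>
        show C e (b : ι) = (0 : Matrix Unit {a // a ∈ X.erase e} (ZMod 2)) u b
        rw [Matrix.zero_apply]
        exact hrow _ (Finset.mem_erase.mp b.2).1
    | inr a =>
      cases y with
      | inl v =>
        show C (a : ι) e = 0
        exact hcol _ (Finset.mem_erase.mp a.2).1
      | inr b => rfl
  have h1 : (subm C X).det = ((subm C X).submatrix q q).det :=
    (Matrix.det_submatrix_equiv_self q _).symm
  rw [h1, hblock]
  rw [Matrix.det_fromBlocks_zero₁₂]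
  congr 1
  rw [Matrix.det_unique]
  rfl

lemma sd_empty (A : Finset α) : A ∆ (∅ : Finset α) = A := by
  rw [show (∅ : Finset α) = ⊥ from rfl, symmDiff_bot]

lemma mem_binaryFeasible {C : Matrix ι ι (ZMod 2)} {A : Finset ι} :
    A ∈ binaryFeasible C ↔ Feas C A := by
  rw [binaryFeasible, Finset.mem_filter]
  simp only [Finset.mem_univ, true_and]
  rfl

/-- The central contradiction: a binary delta-matroid containing `∅, {e}, {f}` but not
`{e,f}` cannot have monomial twist polynomial. -/
lemma propP (C : Matrix ι ι (ZMod 2)) (hC : Cᵀ = C) {e f : ι} (hef : e ≠ f)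
    (he : Feas C {e}) (hf : Feas C {f}) (hefn : ¬ Feas C {e, f})
    {k : ℕ} (hk : ∀ A : Finset ι, width (twist (binaryFeasible C) A) = k) : False := by
  classical
  set G := binaryFeasible C with hG
  have h0 : (∅ : Finset ι) ∈ G := mem_binaryFeasible.mpr (feas_empty C)
  have heG : ({e} : Finset ι) ∈ G := mem_binaryFeasible.mpr he
  have hfG : ({f} : Finset ι) ∈ G := mem_binaryFeasible.mpr hf
  have hefG : ({e, f} : Finset ι) ∉ G := fun h => hefn (mem_binaryFeasible.mp h)
  set r := maxCard G with hr
  -- k = r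
  have hkr : k = r := by
    have h1 := hk ∅
    rw [twist_empty] at h1
    rw [← h1, width, minCard_eq_zero h0, Nat.sub_zero, hr]
  -- every maximum feasible set contains every feasible singleton element
  have hU : ∀ x : ι, ({x} : Finset ι) ∈ G → ∀ X ∈ G, X.card = r → x ∈ X := by
    intro x hx X hX hXc
    have hmem0 : (∅ : Finset ι) ∈ twist G {x} := by
      rw [mem_twist]
      rwa [sd_empty]
    have hmin : minCard (twist G {x}) = 0 := minCard_eq_zero hmem0
    have hw := hk {x}
    rw [hkr, width, hmin, Nat.sub_zero] at hw
    by_contra hxX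
    have hmem : ({x} : Finset ι) ∆ X ∈ twist G {x} := by
      rw [mem_twist, symmDiff_symmDiff_cancel_left]
      exact hX
    have hle := le_maxCard hmem
    rw [hw, symmDiff_comm, sd_singleton hxX, Finset.card_insert_of_notMem hxX, hXc] at hle
    omega
  -- a maximum feasible set
  obtain ⟨Mx, hMx, hMxc⟩ := exists_maxCard ⟨∅, h0⟩
  have hr1 : 1 ≤ r := by
    have := le_maxCard heG
    simpa using this
  have heMx : e ∈ Mx := hU e heG Mx hMx hMxc
  have hfMx : f ∈ Mx := hU f hfG Mx hMx hMxc
  have hr2 : 2 ≤ r := by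
    have hsub : ({e, f} : Finset ι) ⊆ Mx := by
      intro a ha
      rcases Finset.mem_insert.mp ha with rfl | ha
      · exact heMx
      · rwa [Finset.mem_singleton.mp ha]
    have := Finset.card_le_card hsub
    rw [Finset.card_pair hef, hMxc] at this
    exact this
  -- the twist by {e,f} has minimum cardinality 1
  have hmin1 : minCard (twist G {e, f}) = 1 := by
    have hle : minCard (twist G {e, f}) ≤ 1 := by
      have hmem : ({f} : Finset ι) ∈ twist G {e, f} := by
        rw [mem_twist]
        have : ({e, f} : Finset ι) ∆ {f} = {e} := by
          ext a
          simp only [Finset.mem_symmDiff, Finset.mem_insert, Finset.mem_singleton]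
          constructor
          · rintro (⟨rfl | rfl, hn⟩ | ⟨rfl, hn⟩)
            · rfl
            · exact absurd rfl hn
            · exact absurd (Or.inr rfl) hn
          · rintro rfl
            exact Or.inl ⟨Or.inl rfl, fun hh => hef hh⟩
        rw [this]
        exact heG
      have := minCard_le hmem
      simpa using this
    have hge : 1 ≤ minCard (twist G {e, f}) := by
      by_contra hlt
      push_neg at hlt
      interval_cases h : minCard (twist G {e, f})
      obtain ⟨W, hW, hWc⟩ := exists_minCard ⟨{f}, by
        rw [mem_twist]
        have : ({e, f} : Finset ι) ∆ {f} = {e} := by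
          ext a
          simp only [Finset.mem_symmDiff, Finset.mem_insert, Finset.mem_singleton]
          constructor
          · rintro (⟨rfl | rfl, hn⟩ | ⟨rfl, hn⟩)
            · rfl
            · exact absurd rfl hn
            · exact absurd (Or.inr rfl) hn
          · rintro rfl
            exact Or.inl ⟨Or.inl rfl, fun hh => hef hh⟩
        rw [this]
        exact heG⟩
      rw [h] at hWc
      have hWe : W = ∅ := Finset.card_eq_zero.mp hWc
      subst hWe
      rw [mem_twist] at hW
      rw [sd_empty] at hW
      exact hefG hW
    omega
  -- hence its maximum cardinality is r + 1
  have hmax1 : maxCard (twist G {e, f}) = r + 1 := by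
    have hw := hk {e, f}
    rw [hkr, width, hmin1] at hw
    have h2 : 2 ≤ maxCard (twist G {e, f}) := by
      have hmem : ({e, f} : Finset ι) ∈ twist G {e, f} := by
        rw [mem_twist, symmDiff_self]
        exact h0
      have := le_maxCard hmem
      rwa [Finset.card_pair hef] at this
    omega
  -- extract a feasible set of size r - 1 avoiding e and f
  obtain ⟨W, hW, hWc⟩ := exists_maxCard (⟨{e, f}, by
    rw [mem_twist, symmDiff_self]; exact h0⟩ : (twist G {e, f}).Nonempty)
  rw [hmax1] at hWc
  have hXG : ({e, f} : Finset ι) ∆ W ∈ G := mem_twist.mp hW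
  set X := ({e, f} : Finset ι) ∆ W with hXdef
  have hWX : W = ({e, f} : Finset ι) ∆ X := by
    rw [hXdef, symmDiff_symmDiff_cancel_left]
  have hXle : X.card ≤ r := le_maxCard hXG
  have hcard : ({e, f} ∩ X).card = 0 ∧ X.card + 1 = r := by
    have hWc' : (({e, f} : Finset ι) ∆ X).card = r + 1 := by rw [← hWX]; exact hWc
    have hcs := card_symmDiff ({e, f} : Finset ι) X
    have h3 := Finset.card_sdiff_add_card_inter ({e, f} : Finset ι) X
    have h4 := Finset.card_sdiff_add_card_inter X ({e, f} : Finset ι)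
    have h5 : (X ∩ {e, f}).card = ({e, f} ∩ X).card := by rw [Finset.inter_comm]
    have h6 : ({e, f} : Finset ι).card = 2 := Finset.card_pair hef
    omega
  obtain ⟨hint, hXc⟩ := hcard
  have hintE : ({e, f} : Finset ι) ∩ X = ∅ := Finset.card_eq_zero.mp hint
  have heX : e ∉ X := by
    intro h
    have : e ∈ ({e, f} : Finset ι) ∩ X := Finset.mem_inter.mpr ⟨by simp, h⟩
    rw [hintE] at this
    exact absurd this (Finset.notMem_empty e)
  have hfX : f ∉ X := by
    intro h
    have : f ∈ ({e, f} : Finset ι) ∩ X := Finset.mem_inter.mpr ⟨by simp, h⟩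
    rw [hintE] at this
    exact absurd this (Finset.notMem_empty f)
  -- apply the extension lemma
  obtain ⟨W', hsub', hc', hF'⟩ := extension C hC (mem_binaryFeasible.mp hXG)
    (mem_binaryFeasible.mp hMx) (by omega)
  have hW'G : W' ∈ G := mem_binaryFeasible.mpr hF'
  have hW'le : W'.card ≤ r := le_maxCard hW'G
  rcases hc' with hc1 | hc2
  · -- W' has size r, so it contains both e and f, but W' \ X is a single element
    have hW'r : W'.card = r := by omega
    have heW' : e ∈ W' := hU e heG W' hW'G hW'r
    have hfW' : f ∈ W' := hU f hfG W' hW'G hW'r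
    have hsub2 : ({e, f} : Finset ι) ⊆ W' \ X := by
      intro a ha
      rcases Finset.mem_insert.mp ha with rfl | ha
      · exact Finset.mem_sdiff.mpr ⟨heW', heX⟩
      · rw [Finset.mem_singleton.mp ha]
        exact Finset.mem_sdiff.mpr ⟨hfW', hfX⟩
    have hle2 := Finset.card_le_card hsub2
    rw [Finset.card_pair hef, Finset.card_sdiff_of_subset hsub'] at hle2
    omega
  · omega

lemma zmod2_dichotomy : ∀ x : ZMod 2, x = 0 ∨ x = 1 := by decide

/-- If the matrix has zero diagonal then `D(C)` is even; so an odd `D(C)` has a loop. -/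
lemma exists_loop (C : Matrix ι ι (ZMod 2)) (hC : Cᵀ = C)
    (hodd : ¬ IsEvenDM (binaryFeasible C)) : ∃ e, C e e = 1 := by
  by_contra h
  push_neg at h
  have hz : ∀ e, C e e = 0 := by
    intro e
    rcases zmod2_dichotomy (C e e) with h0 | h1
    · exact h0
    · exact absurd h1 (h e)
  apply hodd
  have heven : ∀ Z ∈ binaryFeasible C, Z.card % 2 = 0 := by
    intro Z hZ
    by_contra hzo
    have h1 : Z.card % 2 = 1 := by omega
    have hdet : (subm C Z).det = 0 := by
      apply det_eq_zero_of_alternating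
      · intro i j
        exact symm_apply hC _ _
      · intro i
        exact hz _
      · rwa [Fintype.card_coe]
    exact (mem_binaryFeasible.mp hZ) hdet
  intro X hX Y hY
  rw [heven X hX, heven Y hY]

end Auxiliary

open Matrix

set_option linter.unusedSectionVars false
set_option maxHeartbeats 1000000

/-- Let `D = D(C)` be a connected odd normal binary delta-matroid.  Its twist polynomial is a
monomial iff the ground set is a single element `e` and the feasible sets are `{∅, {e}}`. -/
theorem connected_odd_monomial (C : Matrix ι ι (ZMod 2)) (hC : C.IsSymm)
    (hconn : IsConnected (Finset.univ : Finset ι) (binaryFeasible C))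
    (hodd : ¬ IsEvenDM (binaryFeasible C)) :
    (∃ k : ℕ, ∀ A : Finset ι, width (twist (binaryFeasible C) A) = k) ↔
      ∃ e : ι, (Finset.univ : Finset ι) = {e} ∧
        binaryFeasible C = ({∅, {e}} : Finset (Finset ι)) := by
  classical
  have hCt : Cᵀ = C := hC
  constructor
  · rintro ⟨k, hk⟩
    obtain ⟨e, hee⟩ := exists_loop C hCt hodd
    have h0F : (∅ : Finset ι) ∈ binaryFeasible C := mem_binaryFeasible.mpr (feas_empty C)
    have heFeas : Feas C {e} := by
      rw [Feas, det_subm_singleton, hee]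
      exact one_ne_zero
    have heF : ({e} : Finset ι) ∈ binaryFeasible C := mem_binaryFeasible.mpr heFeas
    by_cases huniv : (Finset.univ : Finset ι) = {e}
    · refine ⟨e, huniv, ?_⟩
      ext Z
      simp only [Finset.mem_insert, Finset.mem_singleton]
      constructor
      · intro hZ
        have hsub : Z ⊆ {e} := huniv ▸ Finset.subset_univ Z
        exact Finset.subset_singleton_iff.mp hsub
      · rintro (rfl | rfl)
        · exact h0F
        · exact heF
    · exfalso
      have hex : ∃ g : ι, g ≠ e := by
        by_contra hg
        push_neg at hg
        apply huniv
        ext a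
        simp [hg a]
      by_cases hiso : ∀ g : ι, g ≠ e → C e g = 0
      · -- e is isolated: contradicts connectedness
        have hrow : ∀ a : ι, a ≠ e → C e a = 0 := hiso
        have hcol : ∀ a : ι, a ≠ e → C a e = 0 := by
          intro a ha
          rw [symm_apply hCt e a]
          exact hiso a ha
        have hkey : ∀ b : Finset ι, e ∉ b → (Feas C (insert e b) ↔ Feas C b) := by
          intro b hb
          have h1 : (subm C (insert e b)).det =
              C e e * (subm C ((insert e b).erase e)).det :=
            det_subm_isolated C (Finset.mem_insert_self e b) hrow hcol
          rw [Finset.erase_insert hb, hee, one_mul] at h1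
          rw [Feas, Feas, h1]
        apply hconn
        refine ⟨{e}, Finset.univ.erase e, {∅, {e}},
          (binaryFeasible C).filter (fun X => e ∉ X), ⟨e, by simp⟩, ?_, ?_, ?_, ?_, ?_, ?_⟩
        · obtain ⟨g, hg⟩ := hex
          exact ⟨g, Finset.mem_erase.mpr ⟨hg, Finset.mem_univ g⟩⟩
        · exact Finset.disjoint_singleton_left.mpr (Finset.notMem_erase e _)
        · ext a
          by_cases hae : a = e <;> simp [hae]
        · -- {∅, {e}} is a delta-matroid on {e}
          refine ⟨⟨∅, by simp⟩, ?_, ?_⟩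
          · intro X hX
            simp only [Finset.mem_insert, Finset.mem_singleton] at hX
            rcases hX with rfl | rfl
            · exact Finset.empty_subset _
            · exact Finset.Subset.refl _
          · intro X hX Y hY u hu
            simp only [Finset.mem_insert, Finset.mem_singleton] at hX hY
            rcases hX with rfl | rfl <;> rcases hY with rfl | rfl
            · rw [symmDiff_self] at hu
              simp at hu
            · have hu' : u = e := by
                rw [show (∅ : Finset ι) = ⊥ from rfl, bot_symmDiff] at hu
                exact Finset.mem_singleton.mp hu
              subst hu'
              refine ⟨u, hu, ?_⟩
              have hp : ({u, u} : Finset ι) = {u} := by simp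
              rw [hp, show (∅ : Finset ι) = ⊥ from rfl, bot_symmDiff]
              simp
            · have hu' : u = e := by
                rw [sd_empty] at hu
                exact Finset.mem_singleton.mp hu
              subst hu'
              refine ⟨u, hu, ?_⟩
              have hp : ({u, u} : Finset ι) = {u} := by simp
              rw [hp, symmDiff_self]
              simp
            · rw [symmDiff_self] at hu
              simp at hu
        · -- the rest is a delta-matroid on univ.erase e
          refine ⟨⟨∅, Finset.mem_filter.mpr ⟨h0F, by simp⟩⟩, ?_, ?_⟩
          · intro X hX
            obtain ⟨hXF, heX⟩ := Finset.mem_filter.mp hX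
            intro a ha
            refine Finset.mem_erase.mpr ⟨?_, Finset.mem_univ a⟩
            intro hae
            exact heX (hae ▸ ha)
          · intro X hX Y hY u hu
            obtain ⟨hXF, heX⟩ := Finset.mem_filter.mp hX
            obtain ⟨hYF, heY⟩ := Finset.mem_filter.mp hY
            obtain ⟨v, hv, hfeas⟩ := exchange C hCt (mem_binaryFeasible.mp hXF)
              (mem_binaryFeasible.mp hYF) hu
            refine ⟨v, hv, Finset.mem_filter.mpr ⟨mem_binaryFeasible.mpr hfeas, ?_⟩⟩
            intro hmem
            rw [Finset.mem_symmDiff] at hmem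
            rcases hmem with ⟨h1, _⟩ | ⟨h1, _⟩
            · exact heX h1
            · have hue : u ≠ e := by
                intro h
                subst h
                rw [Finset.mem_symmDiff] at hu
                rcases hu with ⟨h2, _⟩ | ⟨h2, _⟩
                · exact heX h2
                · exact heY h2
              have hve : v ≠ e := by
                intro h
                subst h
                rw [Finset.mem_symmDiff] at hv
                rcases hv with ⟨h2, _⟩ | ⟨h2, _⟩
                · exact heX h2
                · exact heY h2
              rcases Finset.mem_insert.mp h1 with h2 | h2
              · exact hue h2.symm
              · exact hve (Finset.mem_singleton.mp h2).symm
        · -- the direct sum decomposition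
          ext Z
          rw [directSum]
          simp only [Finset.mem_image, Finset.mem_product]
          constructor
          · intro hZ
            by_cases heZ : e ∈ Z
            · refine ⟨({e}, Z.erase e), ⟨by simp, Finset.mem_filter.mpr
                ⟨?_, Finset.notMem_erase _ _⟩⟩, ?_⟩
              · apply mem_binaryFeasible.mpr
                apply (hkey (Z.erase e) (Finset.notMem_erase _ _)).mp
                rw [Finset.insert_erase heZ]
                exact mem_binaryFeasible.mp hZ
              · show {e} ∪ Z.erase e = Z
                rw [← Finset.insert_eq, Finset.insert_erase heZ]
            · exact ⟨(∅, Z), ⟨by simp, Finset.mem_filter.mpr ⟨hZ, heZ⟩⟩,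
                by show ∅ ∪ Z = Z; rw [Finset.empty_union]⟩
          · rintro ⟨⟨a, b⟩, ⟨ha, hb⟩, rfl⟩
            simp only [Finset.mem_insert, Finset.mem_singleton] at ha
            obtain ⟨hbF, hbe⟩ := Finset.mem_filter.mp hb
            rcases ha with rfl | rfl
            · show ∅ ∪ b ∈ binaryFeasible C
              rw [Finset.empty_union]
              exact hbF
            · show {e} ∪ b ∈ binaryFeasible C
              rw [← Finset.insert_eq]
              exact mem_binaryFeasible.mpr ((hkey b hbe).mpr (mem_binaryFeasible.mp hbF))
      · -- e has a neighbour f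
        push_neg at hiso
        obtain ⟨f, hfe, hCef0⟩ := hiso
        have hfe' : e ≠ f := Ne.symm hfe
        have hCef : C e f = 1 := by
          rcases zmod2_dichotomy (C e f) with h1 | h1
          · exact absurd h1 hCef0
          · exact h1
        have hCfe : C f e = 1 := by
          rw [symm_apply hCt e f]
          exact hCef
        rcases zmod2_dichotomy (C f f) with hff | hff
        · -- C f f = 0 : twist by {e} first
          obtain ⟨C', hC', hiff⟩ := piv C hCt {e} heFeas
          have hsd1 : ({e} : Finset ι) ∆ {f} = ({e, f} : Finset ι) := by
            rw [sd_singleton (by simp only [Finset.mem_singleton]; exact hfe : f ∉ ({e} : Finset ι)), Finset.pair_comm]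
          have hsd2 : ({e} : Finset ι) ∆ ({e, f} : Finset ι) = {f} := by
            ext a
            simp only [Finset.mem_symmDiff, Finset.mem_singleton, Finset.mem_insert]
            constructor
            · rintro (⟨rfl, hn⟩ | ⟨rfl | rfl, hn⟩)
              · exact absurd (Or.inl rfl) hn
              · exact absurd rfl hn
              · rfl
            · rintro rfl
              exact Or.inr ⟨Or.inr rfl, fun hh => hfe hh⟩
          refine propP C' hC' hfe' (k := k) ?_ ?_ ?_ ?_
          · apply (hiff {e}).mpr
            rw [symmDiff_self]
            exact feas_empty C
          · apply (hiff {f}).mpr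
            rw [hsd1, Feas, det_subm_pair C hfe', hee, hff, hCef, hCfe]
            decide
          · intro hcontra
            have h2 := (hiff {e, f}).mp hcontra
            rw [hsd2, Feas, det_subm_singleton, hff] at h2
            exact h2 rfl
          · intro A
            have hGtw : binaryFeasible C' = twist (binaryFeasible C) {e} := by
              ext Z
              rw [mem_binaryFeasible, hiff, mem_twist, mem_binaryFeasible]
            rw [hGtw, twist_twist]
            exact hk _
        · -- C f f = 1 : direct contradiction
          refine propP C hCt hfe' heFeas ?_ ?_ hk
          · rw [Feas, det_subm_singleton, hff]
            exact one_ne_zero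
          · intro hcontra
            rw [Feas, det_subm_pair C hfe', hee, hff, hCef, hCfe] at hcontra
            exact hcontra (by decide)
  · rintro ⟨e, huniv, hFeq⟩
    refine ⟨1, fun A => ?_⟩
    have hw : width ({∅, {e}} : Finset (Finset ι)) = 1 := by
      have hmax : maxCard ({∅, {e}} : Finset (Finset ι)) = 1 := by
        apply le_antisymm
        · apply Finset.sup_le
          intro X hX
          simp only [Finset.mem_insert, Finset.mem_singleton] at hX
          rcases hX with rfl | rfl
          · simp
          · simp
        · have := le_maxCard (show ({e} : Finset ι) ∈ ({∅, {e}} : Finset (Finset ι)) by simp)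
          simpa using this
      have hmin : minCard ({∅, {e}} : Finset (Finset ι)) = 0 := minCard_eq_zero (by simp)
      rw [width, hmax, hmin]
    have hA : A = ∅ ∨ A = {e} := Finset.subset_singleton_iff.mp (huniv ▸ Finset.subset_univ A)
    have htw : twist ({∅, {e}} : Finset (Finset ι)) {e} = {∅, {e}} := by
      ext Z
      rw [mem_twist]
      simp only [Finset.mem_insert, Finset.mem_singleton]
      constructor
      · rintro (h | h)
        · right
          rw [show (∅ : Finset ι) = ⊥ from rfl] at h
          exact (symmDiff_eq_bot.mp h).symm
        · left
          have h2 : Z = ({e} : Finset ι) ∆ (({e} : Finset ι) ∆ Z) :=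
            (symmDiff_symmDiff_cancel_left _ _).symm
          rw [h, symmDiff_self] at h2
          exact h2
      · rintro (rfl | rfl)
        · right
          exact sd_empty _
        · left
          rw [symmDiff_self]
          rfl
    rcases hA with rfl | rfl
    · rw [twist_empty, hFeq]
      exact hw
    · rw [hFeq, htw]
      exact hw

end DeltaMatroid

end
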